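/- (Single-parameter trigonometric structure of expectation values) Let N be a positive integer, let M and G be N×N complex matrices with M Hermitian (Mᴴ = M), G Hermitian, and G·G = 1, and let v ∈ ℂ^N. For x ∈ ℝ set ψ(x) = exp(−(i·x/2)·G)·v (matrix exponential applied to v). Then there exist real numbers a, b, c such that for every x ∈ ℝ, star(ψ(x)) ⬝ᵥ (M.mulVec ψ(x)) = a + b·cos(x) + c·sin(x) (equality in ℂ, with the real right-hand side coerced). -/

import Mathlib

open Matrix

noncomputable section

lemma exp_smul_sq_one {N : ℕ} (G : Matrix (Fin N) (Fin N) ℂ) (hG2 : G * G = 1) (z : ℂ) :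
    NormedSpace.exp (z • G) = Complex.cosh z • (1 : Matrix (Fin N) (Fin N) ℂ) +
      Complex.sinh z • G := by
  rw [NormedSpace.exp_eq_tsum ℂ]
  refine HasSum.tsum_eq ?_
  have hsq : G ^ 2 = 1 := by rw [sq, hG2]
  refine HasSum.even_add_odd ?_ ?_
  · have h := (Complex.hasSum_cosh z).smul_const (1 : Matrix (Fin N) (Fin N) ℂ)
    convert h using 2 with k
    case e'_3 => rfl
    rw [smul_pow, pow_mul G, hsq, one_pow, smul_smul]
    congr 1
    rw [div_eq_mul_inv]
    ring
  · have h := (Complex.hasSum_sinh z).smul_const G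
    convert h using 2 with k
    case e'_3 => rfl
    rw [smul_pow, pow_succ G, pow_mul G, hsq, one_pow, one_mul, smul_smul]
    congr 1
    rw [div_eq_mul_inv, pow_succ]
    ring

lemma conj_dot {N : ℕ} (M : Matrix (Fin N) (Fin N) ℂ) (u w : Fin N → ℂ) :
    (starRingEnd ℂ) (star u ⬝ᵥ M.mulVec w) = star w ⬝ᵥ Mᴴ.mulVec u := by
  simp only [dotProduct, mulVec, dotProduct, Pi.star_apply, conjTranspose_apply, map_sum,
    Complex.star_def, Finset.mul_sum, Finset.sum_mul]
  rw [Finset.sum_comm]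
  refine Finset.sum_congr rfl fun i _ => Finset.sum_congr rfl fun j _ => by
    simp only [_root_.map_mul, Complex.conj_conj]; ring

theorem stmt_18 (N : ℕ) (hN : 0 < N) (M G : Matrix (Fin N) (Fin N) ℂ)
    (hM : Mᴴ = M) (hG : Gᴴ = G) (hG2 : G * G = 1) (v : Fin N → ℂ) :
    ∃ a b c : ℝ, ∀ x : ℝ,
      (star ((NormedSpace.exp ((-(Complex.I * ((x / 2 : ℝ) : ℂ))) • G)).mulVec v)) ⬝ᵥ
          (M.mulVec ((NormedSpace.exp ((-(Complex.I * ((x / 2 : ℝ) : ℂ))) • G)).mulVec v)) =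
        ((a + b * Real.cos x + c * Real.sin x : ℝ) : ℂ) := by
  set w : Fin N → ℂ := G.mulVec v with hw
  set A : ℂ := star v ⬝ᵥ M.mulVec v with hA
  set B : ℂ := star w ⬝ᵥ M.mulVec w with hB
  set Z : ℂ := star v ⬝ᵥ M.mulVec w with hZ
  have hAr : (starRingEnd ℂ) A = A := by
    rw [hA]; exact (conj_dot M v v).trans (by rw [hM])
  have hBr : (starRingEnd ℂ) B = B := by
    rw [hB]; exact (conj_dot M w w).trans (by rw [hM])
  have hZc : star w ⬝ᵥ M.mulVec v = (starRingEnd ℂ) Z := by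
    rw [hZ, conj_dot M v w, hM]
  have hAre : A = ((A.re : ℝ) : ℂ) := (Complex.conj_eq_iff_re.mp hAr).symm
  have hBre : B = ((B.re : ℝ) : ℂ) := (Complex.conj_eq_iff_re.mp hBr).symm
  set a0 : ℝ := A.re
  set b0 : ℝ := B.re
  set z0 : ℝ := Z.im
  refine ⟨(a0 + b0) / 2, (a0 - b0) / 2, z0, fun x => ?_⟩
  have hexp := exp_smul_sq_one G hG2 (-(Complex.I * ((x / 2 : ℝ) : ℂ)))
  have hcosh : Complex.cosh (-(Complex.I * ((x / 2 : ℝ) : ℂ))) = ((Real.cos (x/2) : ℝ) : ℂ) := by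
    rw [Complex.cosh_neg, mul_comm, Complex.cosh_mul_I, ← Complex.ofReal_cos]
  have hsinh : Complex.sinh (-(Complex.I * ((x / 2 : ℝ) : ℂ))) =
      -(((Real.sin (x/2) : ℝ) : ℂ) * Complex.I) := by
    rw [Complex.sinh_neg, mul_comm, Complex.sinh_mul_I, ← Complex.ofReal_sin]
  rw [hexp, hcosh, hsinh]
  set cθ : ℝ := Real.cos (x/2)
  set sθ : ℝ := Real.sin (x/2)
  have hψ : ((cθ : ℂ) • (1 : Matrix (Fin N) (Fin N) ℂ) +
      (-(((sθ : ℝ) : ℂ) * Complex.I)) • G).mulVec v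
      = (cθ : ℂ) • v + (-((sθ : ℂ) * Complex.I)) • w := by
    rw [add_mulVec, smul_mulVec, smul_mulVec, one_mulVec, hw]
  rw [hψ]
  have expand : star ((cθ : ℂ) • v + (-((sθ : ℂ) * Complex.I)) • w) ⬝ᵥ
      M.mulVec ((cθ : ℂ) • v + (-((sθ : ℂ) * Complex.I)) • w)
      = (cθ : ℂ)^2 * A + (sθ : ℂ)^2 * B
        + ((cθ * sθ : ℝ) : ℂ) * (Complex.I * ((starRingEnd ℂ) Z - Z)) := by
    rw [mulVec_add, mulVec_smul, mulVec_smul]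
    simp only [star_add, star_smul, add_dotProduct, dotProduct_add, smul_dotProduct,
      dotProduct_smul, star_mul', Complex.star_def, Complex.conj_ofReal, Complex.conj_I,
      star_neg, smul_eq_mul]
    rw [← hA, ← hB, ← hZ, hZc]
    push_cast
    ring_nf
    rw [Complex.I_sq]
    ring
  rw [expand]
  have hZim : Complex.I * ((starRingEnd ℂ) Z - Z) = ((2 * z0 : ℝ) : ℂ) := by
    rw [show (starRingEnd ℂ) Z - Z = -(Z - (starRingEnd ℂ) Z) by ring, Complex.sub_conj]
    push_cast
    ring_nf
    rw [Complex.I_sq]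
    ring
  rw [hZim, hAre, hBre]
  have hc2 : cθ^2 = (1 + Real.cos x) / 2 := by
    have h := Real.cos_sq (x/2)
    rw [show 2 * (x/2) = x by ring] at h
    rw [h]; ring
  have hs2 : sθ^2 = (1 - Real.cos x) / 2 := by
    rw [Real.sin_sq, hc2]; ring
  have hcs : cθ * sθ = Real.sin x / 2 := by
    have h : Real.sin x = 2 * sθ * cθ := by
      rw [show x = 2 * (x/2) by ring, Real.sin_two_mul]
    rw [h]; ring
  have key : cθ^2 * a0 + sθ^2 * b0 + (cθ * sθ) * (2 * z0)
      = (a0 + b0) / 2 + (a0 - b0) / 2 * Real.cos x + z0 * Real.sin x := by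
    linear_combination a0 * hc2 + b0 * hs2 + 2 * z0 * hcs
  calc (cθ : ℂ)^2 * ((a0 : ℝ) : ℂ) + (sθ : ℂ)^2 * ((b0 : ℝ) : ℂ)
        + ((cθ * sθ : ℝ) : ℂ) * ((2 * z0 : ℝ) : ℂ)
      = ((cθ^2 * a0 + sθ^2 * b0 + (cθ * sθ) * (2 * z0) : ℝ) : ℂ) := by push_cast; ring
    _ = (((a0 + b0) / 2 + (a0 - b0) / 2 * Real.cos x + z0 * Real.sin x : ℝ) : ℂ) := by
        rw [key]
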